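/- Let r ≥ 1 be an integer and a_1, …, a_r real numbers with a_m ≥ 1 for all m. Then for every t > 0, the second derivative of the function Ψ(t) = (2 − r)·log(sinh(t/2)) + Σ_{m=1}^r log(sinh(t/(2a_m))) is strictly negative; equivalently, −4Ψ''(t) = 2/sinh²(t/2) + Σ_{m=1}^r (1/(a_m² sinh²(t/(2a_m))) − 1/sinh²(t/2)) > 0. -/

import Mathlib

open Real Finset

private lemma sinh_smul_le {c x : ℝ} (hc0 : 0 ≤ c) (hc1 : c ≤ 1) (hx : 0 ≤ x) :
    Real.sinh (c * x) ≤ c * Real.sinh x := by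
  have hd : ∀ s : ℝ, HasDerivAt (fun s => c * Real.sinh s - Real.sinh (c * s))
      (c * Real.cosh s - Real.cosh (c * s) * c) s := by
    intro s
    have hinner : HasDerivAt (fun u : ℝ => c * u) c s := by
      simpa using (hasDerivAt_id s).const_mul c
    exact ((Real.hasDerivAt_sinh s).const_mul c).sub
      ((Real.hasDerivAt_sinh (c * s)).comp s hinner)
  have hmono : MonotoneOn (fun s => c * Real.sinh s - Real.sinh (c * s)) (Set.Ici 0) := by
    apply monotoneOn_of_deriv_nonneg (convex_Ici 0)
    · exact Continuous.continuousOn (by continuity)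
    · intro s _
      exact (hd s).differentiableAt.differentiableWithinAt
    · intro s hs
      rw [(hd s).deriv]
      have hcosh : Real.cosh (c * s) ≤ Real.cosh s := by
        rw [Real.cosh_le_cosh]
        simp only [Set.mem_Ioi, interior_Ici, Set.mem_Ioi] at hs
        rw [abs_of_nonneg (by positivity : (0:ℝ) ≤ c * s), abs_of_nonneg hs.le]
        nlinarith
      nlinarith
  have h0 := hmono (Set.self_mem_Ici) (Set.mem_Ici.mpr hx) hx
  simp only [Real.sinh_zero, mul_zero, sub_zero] at h0
  linarith

private lemma key_ineq {a x : ℝ} (hA : 1 ≤ a) (hx : 0 < x) :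
    1 / Real.sinh x ^ 2 ≤ 1 / (a ^ 2 * Real.sinh (x / a) ^ 2) := by
  have ha0 : 0 < a := lt_of_lt_of_le one_pos hA
  have hsx : 0 < Real.sinh x := Real.sinh_pos_iff.mpr hx
  have hsxa : 0 < Real.sinh (x / a) := Real.sinh_pos_iff.mpr (by positivity)
  have hle : a * Real.sinh (x / a) ≤ Real.sinh x := by
    have := sinh_smul_le (c := a⁻¹) (by positivity) (by
      rw [inv_le_one_iff₀]; right; exact hA) hx.le
    have h2 : Real.sinh (x / a) ≤ a⁻¹ * Real.sinh x := by
      rwa [div_eq_inv_mul]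
    calc a * Real.sinh (x / a) ≤ a * (a⁻¹ * Real.sinh x) := by
          exact mul_le_mul_of_nonneg_left h2 ha0.le
      _ = Real.sinh x := by field_simp
  have hsq : (a * Real.sinh (x / a)) ^ 2 ≤ Real.sinh x ^ 2 := by
    apply pow_le_pow_left₀ (by positivity) hle
  rw [mul_pow] at hsq
  apply one_div_le_one_div_of_le (by positivity) hsq

private lemma hasDerivAt_log_sinh {c s : ℝ} (hc : 0 < c) (hs : 0 < s) :
    HasDerivAt (fun u => Real.log (Real.sinh (u / c)))
      (Real.cosh (s / c) * c⁻¹ / Real.sinh (s / c)) s := by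
  have hne : Real.sinh (s / c) ≠ 0 := (Real.sinh_pos_iff.mpr (by positivity)).ne'
  have h1 : HasDerivAt (fun u : ℝ => Real.sinh (u / c)) (Real.cosh (s / c) * c⁻¹) s := by
    have := (Real.hasDerivAt_sinh (s / c)).comp s ((hasDerivAt_id s).div_const c)
    simpa [div_eq_mul_inv, Function.comp_def] using this
  exact h1.log hne

private lemma hasDerivAt_coth {c s : ℝ} (hc : 0 < c) (hs : 0 < s) :
    HasDerivAt (fun u => Real.cosh (u / c) * c⁻¹ / Real.sinh (u / c))
      (-(c ^ 2 * Real.sinh (s / c) ^ 2)⁻¹) s := by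
  have hsp : 0 < Real.sinh (s / c) := Real.sinh_pos_iff.mpr (by positivity)
  have hne : Real.sinh (s / c) ≠ 0 := hsp.ne'
  have hlin : HasDerivAt (fun u : ℝ => u / c) c⁻¹ s := by
    simpa [div_eq_mul_inv] using (hasDerivAt_id s).div_const c
  have hcosh : HasDerivAt (fun u : ℝ => Real.cosh (u / c) * c⁻¹)
      (Real.sinh (s / c) * c⁻¹ * c⁻¹) s := by
    exact (((Real.hasDerivAt_cosh (s / c)).comp s hlin)).mul_const c⁻¹
  have hsinh : HasDerivAt (fun u : ℝ => Real.sinh (u / c))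
      (Real.cosh (s / c) * c⁻¹) s := by
    have := (Real.hasDerivAt_sinh (s / c)).comp s hlin; exact this
  have := hcosh.div hsinh hne
  refine this.congr_deriv ?_
  symm
  have hid : Real.cosh (s / c) ^ 2 - Real.sinh (s / c) ^ 2 = 1 :=
    Real.cosh_sq_sub_sinh_sq (s / c)
  have hc' : c ≠ 0 := hc.ne'
  field_simp
  linear_combination hid

theorem psi_second_deriv_neg (r : ℕ) (hr : 1 ≤ r) (a : Fin r → ℝ) (ha : ∀ m, 1 ≤ a m)
    (t : ℝ) (ht : 0 < t) :
    let Ψ : ℝ → ℝ := fun s =>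
      (2 - (r : ℝ)) * Real.log (Real.sinh (s / 2)) +
        ∑ m, Real.log (Real.sinh (s / (2 * a m)))
    deriv (deriv Ψ) t < 0 ∧
      -4 * deriv (deriv Ψ) t =
        2 / (Real.sinh (t / 2)) ^ 2 +
          ∑ m, (1 / ((a m) ^ 2 * (Real.sinh (t / (2 * a m))) ^ 2) -
            1 / (Real.sinh (t / 2)) ^ 2) ∧
      0 < 2 / (Real.sinh (t / 2)) ^ 2 +
          ∑ m, (1 / ((a m) ^ 2 * (Real.sinh (t / (2 * a m))) ^ 2) -
            1 / (Real.sinh (t / 2)) ^ 2) := by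
  intro Ψ
  have hapos : ∀ m, 0 < a m := fun m => lt_of_lt_of_le one_pos (ha m)
  set g : ℝ → ℝ := fun s =>
    (2 - (r : ℝ)) * (Real.cosh (s / 2) * (2:ℝ)⁻¹ / Real.sinh (s / 2)) +
      ∑ m, Real.cosh (s / (2 * a m)) * (2 * a m)⁻¹ / Real.sinh (s / (2 * a m)) with hg
  have hΨ' : ∀ s ∈ Set.Ioi (0:ℝ), HasDerivAt Ψ (g s) s := by
    intro s hs
    have hs0 : (0:ℝ) < s := hs
    have h1 := (hasDerivAt_log_sinh (c := 2) two_pos hs0).const_mul (2 - (r : ℝ))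
    have h2 : HasDerivAt (fun u => ∑ m, Real.log (Real.sinh (u / (2 * a m))))
        (∑ m, Real.cosh (s / (2 * a m)) * (2 * a m)⁻¹ / Real.sinh (s / (2 * a m))) s := by
      exact HasDerivAt.fun_sum fun m _ =>
        hasDerivAt_log_sinh (c := 2 * a m) (mul_pos two_pos (hapos m)) hs0
    exact h1.add h2
  have hev : deriv Ψ =ᶠ[nhds t] g := by
    filter_upwards [Ioi_mem_nhds ht] with s hs
    exact (hΨ' s hs).deriv
  have hG : HasDerivAt g
      ((2 - (r : ℝ)) * (-(2 ^ 2 * Real.sinh (t / 2) ^ 2)⁻¹) +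
        ∑ m, -((2 * a m) ^ 2 * Real.sinh (t / (2 * a m)) ^ 2)⁻¹) t := by
    exact ((hasDerivAt_coth (c := 2) two_pos ht).const_mul (2 - (r : ℝ))).add
      (HasDerivAt.fun_sum fun m _ => hasDerivAt_coth (c := 2 * a m) (mul_pos two_pos (hapos m)) ht)
  have hderiv2 : deriv (deriv Ψ) t =
      (2 - (r : ℝ)) * (-(2 ^ 2 * Real.sinh (t / 2) ^ 2)⁻¹) +
        ∑ m, -((2 * a m) ^ 2 * Real.sinh (t / (2 * a m)) ^ 2)⁻¹ := by
    rw [hev.deriv_eq]; exact hG.deriv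
  have hs2 : 0 < Real.sinh (t / 2) := Real.sinh_pos_iff.mpr (by positivity)
  have hsm : ∀ m, 0 < Real.sinh (t / (2 * a m)) := fun m =>
    Real.sinh_pos_iff.mpr (div_pos ht (mul_pos two_pos (hapos m)))
  have heq : -4 * deriv (deriv Ψ) t =
      2 / (Real.sinh (t / 2)) ^ 2 +
        ∑ m, (1 / ((a m) ^ 2 * (Real.sinh (t / (2 * a m))) ^ 2) -
          1 / (Real.sinh (t / 2)) ^ 2) := by
    rw [hderiv2]
    rw [Finset.sum_sub_distrib, Finset.sum_const, Finset.card_univ, Fintype.card_fin]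
    rw [mul_add, Finset.mul_sum]
    have hterm : ∀ m, -4 * -((2 * a m) ^ 2 * Real.sinh (t / (2 * a m)) ^ 2)⁻¹ =
        1 / ((a m) ^ 2 * (Real.sinh (t / (2 * a m))) ^ 2) := by
      intro m
      have h1 := (hapos m).ne'
      have h2 := (hsm m).ne'
      field_simp
      ring
    rw [Finset.sum_congr rfl fun m _ => hterm m]
    have h2 := hs2.ne'
    field_simp
    rw [nsmul_eq_mul]
    field_simp
    ring
  have hposterm : ∀ m, 0 ≤ 1 / ((a m) ^ 2 * (Real.sinh (t / (2 * a m))) ^ 2) -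
      1 / (Real.sinh (t / 2)) ^ 2 := by
    intro m
    have := key_ineq (a := a m) (x := t / 2) (ha m) (half_pos ht)
    have heqx : t / 2 / a m = t / (2 * a m) := by
      field_simp
    rw [heqx] at this
    linarith
  have hpos : 0 < 2 / (Real.sinh (t / 2)) ^ 2 +
      ∑ m, (1 / ((a m) ^ 2 * (Real.sinh (t / (2 * a m))) ^ 2) -
        1 / (Real.sinh (t / 2)) ^ 2) := by
    have h1 : 0 < 2 / (Real.sinh (t / 2)) ^ 2 := by positivity
    have h2 : 0 ≤ ∑ m, (1 / ((a m) ^ 2 * (Real.sinh (t / (2 * a m))) ^ 2) -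
        1 / (Real.sinh (t / 2)) ^ 2) := Finset.sum_nonneg fun m _ => hposterm m
    linarith
  refine ⟨?_, heq, hpos⟩
  nlinarith [heq, hpos]
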